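/- arXiv:2209.01759 — 3 statements merged into one kernel-verified Lean document; each statement's English description precedes it below -/
import Mathlib

section
/- Let n ≥ 1, A ∈ ℝ^{n×n} invertible, Y = Yᵀ > 0 with AY + YAᵀ ≤ 0, B ∈ ℝⁿ, C ∈ ℝ^{1×n} with B + AYCᵀ = 0, and suppose 1/k_h > CYCᵀ with k_h > 0. Define W(x, x_h) = ½xᵀY⁻¹x + x_h²/(2k_h) − (Cx)·x_h. Then W is positive definite on ℝⁿ × ℝ, i.e., W(x, x_h) > 0 for all (x, x_h) ≠ (0, 0), and W(0,0) = 0. -/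
open Matrix

theorem stmt_11 (n : ℕ) (hn : 1 ≤ n) (A Y : Matrix (Fin n) (Fin n) ℝ)
    (B : Matrix (Fin n) (Fin 1) ℝ) (C : Matrix (Fin 1) (Fin n) ℝ) (k_h : ℝ)
    (hA : IsUnit A) (hY : Y.PosDef) (hYsym : Y.IsSymm)
    (hlyap : (-(A * Y + Y * Aᵀ)).PosSemidef)
    (hBC : B + A * Y * Cᵀ = 0) (hk : k_h > 0)
    (hdc : 1 / k_h > (C * Y * Cᵀ) 0 0) :
    (∀ (x : Fin n → ℝ) (x_h : ℝ), (x, x_h) ≠ (0, 0) →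
        (1 / 2) * (x ⬝ᵥ Y⁻¹.mulVec x) + x_h ^ 2 / (2 * k_h) - (C.mulVec x 0) * x_h > 0) ∧
      (1 / 2) * ((0 : Fin n → ℝ) ⬝ᵥ Y⁻¹.mulVec 0) + (0 : ℝ) ^ 2 / (2 * k_h)
        - (C.mulVec 0 0) * 0 = 0 := by
  have hM : Y⁻¹.PosDef := hY.inv
  have hYinv : Y⁻¹ * Y = 1 := Matrix.nonsing_inv_mul Y (isUnit_iff_ne_zero.mpr hY.det_pos.ne')
  have hMsym : Y⁻¹.IsSymm := by
    rw [Matrix.IsSymm, Matrix.transpose_nonsing_inv, hYsym]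
  set M := Y⁻¹ with hMdef
  set c : Fin n → ℝ := fun i => C 0 i with hc
  set v : Fin n → ℝ := Y.mulVec c with hv
  have hMv : M.mulVec v = c := by
    rw [hv, Matrix.mulVec_mulVec, hYinv, Matrix.one_mulVec]
  have hcv : c ⬝ᵥ v = (C * Y * Cᵀ) 0 0 := by
    simp only [hv, hc, Matrix.mul_apply, Matrix.mulVec, dotProduct, Finset.mul_sum,
      Finset.sum_mul, Matrix.transpose_apply]
    rw [Finset.sum_comm]
    refine Finset.sum_congr rfl fun i _ => Finset.sum_congr rfl fun j _ => ?_
    rw [hYsym.apply i j]; ring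
  have hCx : ∀ x : Fin n → ℝ, C.mulVec x 0 = c ⬝ᵥ x := by
    intro x; simp [hc, Matrix.mulVec, dotProduct]
  constructor
  · intro x x_h hxx
    set z : Fin n → ℝ := x - x_h • v with hz
    have hkey : x ⬝ᵥ M.mulVec x =
        z ⬝ᵥ M.mulVec z + 2 * x_h * (c ⬝ᵥ x) - x_h ^ 2 * (C * Y * Cᵀ) 0 0 := by
      have hvMx : v ⬝ᵥ M.mulVec x = c ⬝ᵥ x := by
        rw [Matrix.dotProduct_mulVec, ← Matrix.mulVec_transpose, hMsym.eq, hMv]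
      have hxMv : x ⬝ᵥ M.mulVec v = c ⬝ᵥ x := by
        rw [hMv, dotProduct_comm]
      have : z ⬝ᵥ M.mulVec z = x ⬝ᵥ M.mulVec x - x_h * (c ⬝ᵥ x)
          - x_h * (c ⬝ᵥ x) + x_h ^ 2 * (c ⬝ᵥ v) := by
        rw [hz]
        simp only [Matrix.mulVec_sub, Matrix.mulVec_smul, dotProduct_sub,
          sub_dotProduct, smul_dotProduct, dotProduct_smul, smul_eq_mul,
          hvMx, hxMv, hMv]
        rw [dotProduct_comm x c, dotProduct_comm v c]
        ring
      rw [this, hcv]; ring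
    have hzq : 0 ≤ z ⬝ᵥ M.mulVec z := by
      have := hM.posSemidef.dotProduct_mulVec_nonneg z; simpa using this
    have hquad : 0 ≤ x_h ^ 2 * (1 / k_h - (C * Y * Cᵀ) 0 0) :=
      mul_nonneg (sq_nonneg _) (by linarith)
    rw [hCx]
    by_cases hx_h : x_h = 0
    · have hx : x ≠ 0 := by
        intro h; exact hxx (by simp [h, hx_h])
      have hz0 : z = x := by simp [hz, hx_h]
      have : 0 < x ⬝ᵥ M.mulVec x := by
        have := hM.dotProduct_mulVec_pos hx; simpa using this
      subst hx_h
      simp only [ne_eq, zero_pow, mul_zero, sub_zero]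
      positivity
    · have hquad' : 0 < x_h ^ 2 * (1 / k_h - (C * Y * Cᵀ) 0 0) :=
        mul_pos (by positivity) (by linarith)
      have hinv : x_h ^ 2 / (2 * k_h) = (1/2) * (x_h ^ 2 * (1 / k_h)) := by
        field_simp
      rw [hkey]
      nlinarith [hzq]
  · simp
end

section
/- Let A ∈ ℝ^{n×n} be invertible, Y = Yᵀ > 0, B ∈ ℝⁿ, C ∈ ℝ^{1×n} with B + AYCᵀ = 0. Then for any x ∈ ℝⁿ and u ∈ ℝ, with ẋ := Ax + Bu, one has (xᵀY⁻¹ − u·C)·ẋ = ½ ẋᵀ(A⁻ᵀY⁻¹ + Y⁻¹A⁻¹)ẋ. -/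
open Matrix

theorem stmt_12 (n : ℕ) (A Y : Matrix (Fin n) (Fin n) ℝ)
    (B : Matrix (Fin n) (Fin 1) ℝ) (C : Matrix (Fin 1) (Fin n) ℝ)
    (hA : IsUnit A) (hY : Y.PosDef) (hYsym : Y.IsSymm)
    (hBC : B + A * Y * Cᵀ = 0)
    (x : Matrix (Fin n) (Fin 1) ℝ) (u : ℝ) :
    (xᵀ * Y⁻¹ - u • C) * (A * x + u • B) =
      (1 / 2 : ℝ) • ((A * x + u • B)ᵀ * ((A⁻¹)ᵀ * Y⁻¹ + Y⁻¹ * A⁻¹) * (A * x + u • B)) := by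
  have hAdet : IsUnit A.det := (Matrix.isUnit_iff_isUnit_det A).mp hA
  have hYdet : IsUnit Y.det := isUnit_iff_ne_zero.mpr hY.det_pos.ne'
  have hAA : A⁻¹ * A = 1 := Matrix.nonsing_inv_mul A hAdet
  have hYinv_symm : (Y⁻¹)ᵀ = Y⁻¹ := by
    rw [Matrix.transpose_nonsing_inv, hYsym.eq]
  have h1 : A * Y * Cᵀ = -B := eq_neg_of_add_eq_zero_right hBC
  have h2 : Cᵀ = -(Y⁻¹ * (A⁻¹ * B)) := by
    calc Cᵀ = Y⁻¹ * (Y * Cᵀ) := by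
          rw [← Matrix.mul_assoc, Matrix.nonsing_inv_mul Y hYdet, Matrix.one_mul]
      _ = Y⁻¹ * (A⁻¹ * (A * (Y * Cᵀ))) := by
          rw [← Matrix.mul_assoc A⁻¹ A, hAA, Matrix.one_mul]
      _ = Y⁻¹ * (A⁻¹ * (-B)) := by rw [← Matrix.mul_assoc A Y, h1]
      _ = -(Y⁻¹ * (A⁻¹ * B)) := by rw [Matrix.mul_neg, Matrix.mul_neg]
  have hC : C = -(Bᵀ * ((A⁻¹)ᵀ * Y⁻¹)) := by
    have := congrArg Matrix.transpose h2
    simp only [Matrix.transpose_transpose, Matrix.transpose_mul,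
      Matrix.transpose_neg, hYinv_symm] at this
    rw [this, Matrix.mul_assoc]
  set v := A * x + u • B with hv
  have hAAT : Aᵀ * (A⁻¹)ᵀ = 1 := by
    rw [← Matrix.transpose_mul, hAA, Matrix.transpose_one]
  have key : xᵀ * Y⁻¹ - u • C = vᵀ * ((A⁻¹)ᵀ * Y⁻¹) := by
    have e1 : xᵀ * Aᵀ * ((A⁻¹)ᵀ * Y⁻¹) = xᵀ * Y⁻¹ := by
      rw [Matrix.mul_assoc, ← Matrix.mul_assoc Aᵀ, hAAT, Matrix.one_mul]
    rw [hC, hv, Matrix.transpose_add, Matrix.transpose_mul, Matrix.transpose_smul,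
      Matrix.add_mul, e1, Matrix.smul_mul, smul_neg, sub_neg_eq_add]
  have h11 : ∀ M : Matrix (Fin 1) (Fin 1) ℝ, Mᵀ = M := by
    intro M; ext i j
    rw [Subsingleton.elim i j, Matrix.transpose_apply]
  have hswap : vᵀ * (Y⁻¹ * A⁻¹) * v = vᵀ * ((A⁻¹)ᵀ * Y⁻¹) * v := by
    have := h11 (vᵀ * ((A⁻¹)ᵀ * Y⁻¹) * v)
    simp only [Matrix.transpose_mul, Matrix.transpose_transpose, hYinv_symm] at this
    rw [Matrix.mul_assoc]
    convert this using 2 <;> rw [Matrix.mul_assoc]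
  rw [key]
  conv_rhs => rw [Matrix.mul_add vᵀ ((A⁻¹)ᵀ * Y⁻¹) (Y⁻¹ * A⁻¹), Matrix.add_mul, hswap]
  rw [← two_smul ℝ, smul_smul]
  norm_num
end

section
/- Let k_h > 0 and let V(x_h) = x_h²/(2k_h). Then V is positive definite on ℝ: V(0) = 0 and V(x_h) > 0 for x_h ≠ 0; and for all e, x_h ∈ ℝ with e·x_h ≥ x_h²/k_h, one has V'(x_h)·(ω_h·e) ≤ ω_h·e² for every ω_h ≥ 0, where V'(x_h) = x_h/k_h; this establishes that the HIGS in integrator mode satisfies the dissipation inequality V̇ ≤ u̇·e of a nonlinear negative imaginary system. -/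
theorem stmt_14 (k_h : ℝ) (hk : k_h > 0) :
    ((fun x_h : ℝ => x_h ^ 2 / (2 * k_h)) 0 = 0 ∧
      ∀ x_h : ℝ, x_h ≠ 0 → (fun x_h : ℝ => x_h ^ 2 / (2 * k_h)) x_h > 0) ∧
    ∀ ω_h : ℝ, ω_h ≥ 0 → ∀ e x_h : ℝ, e * x_h ≥ x_h ^ 2 / k_h →
      (x_h / k_h) * (ω_h * e) ≤ ω_h * e ^ 2 := by
  refine ⟨⟨by norm_num, fun x h => by positivity⟩, ?_⟩
  intro ω hω e x hs
  have hs' : e * x * k_h ≥ x ^ 2 := by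
    have := (div_le_iff₀ hk).mp hs
    linarith
  have key : (x / k_h) * e ≤ e ^ 2 := by
    rw [div_mul_eq_mul_div, div_le_iff₀ hk]
    nlinarith [sq_nonneg (e * k_h - x)]
  nlinarith [mul_le_mul_of_nonneg_left key hω]
end
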